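/- Abstract skeleton of Theorem 1: Let 𝓜 be a finite nonempty set, M₀ ∈ 𝓜, and for each n and each M ∈ 𝓜 let T_{n,M} be a real random variable on a common probability space and a_{n,M} > 0 a real number; set W_{n,M} = T_{n,M} − a_{n,M}. Suppose 𝓜∖{M₀} = N₁ ∪ N₂ where: (i) for every M ∈ N₁ there exist δ_M > 0 and random variables R_{n,M} converging to 0 in probability with (T_{n,M} − T_{n,M₀})/n ≤ −δ_M + R_{n,M} almost surely for each n, and moreover a_{n,M₀}/n → 0 and a_{n,M} ≥ 0; (ii) for every M ∈ N₂, (T_{n,M} − T_{n,M₀})/a_{n,M₀} converges to 0 in probability and liminf_n a_{n,M}/a_{n,M₀} > 1. Then for any sequence of random elements \hat M_n of 𝓜 satisfying W_{n,\hat M_n} = max_{M∈𝓜} W_{n,M} pointwise, P(\hat M_n = M₀) → 1 as n → ∞. -/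
import Mathlib


open MeasureTheory Filter
open scoped ProbabilityTheory

/-- A sequence of real random variables converges to `0` in probability. -/
def TendstoInProbZero {Ω : Type*} [MeasureSpace Ω] (X : ℕ → Ω → ℝ) : Prop :=
  ∀ ε : ℝ, 0 < ε →
    Tendsto (fun n => (ℙ {ω | ε < |X n ω|}).toReal) atTop (nhds 0)

/-- Abstract skeleton of Theorem 1: a penalized-criterion maximizer over a finite
model set is consistent, given the underestimation and overestimation controls. -/
theorem abstract_skeleton_consistency
    {Ω : Type*} [MeasureSpace Ω] [IsProbabilityMeasure (ℙ : Measure Ω)]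
    {𝓜 : Type*} [Fintype 𝓜] [Nonempty 𝓜] (M₀ : 𝓜)
    (T : ℕ → 𝓜 → Ω → ℝ) (a : ℕ → 𝓜 → ℝ) (ha_pos : ∀ n M, 0 < a n M)
    (W : ℕ → 𝓜 → Ω → ℝ) (hW : ∀ n M ω, W n M ω = T n M ω - a n M)
    (N₁ N₂ : Set 𝓜) (hsplit : {M | M ≠ M₀} = N₁ ∪ N₂)
    (h₁ : ∀ M ∈ N₁, ∃ δ : ℝ, 0 < δ ∧ ∃ R : ℕ → Ω → ℝ,
      TendstoInProbZero R ∧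
      ∀ n : ℕ, ∀ᵐ ω ∂ℙ, (T n M ω - T n M₀ ω) / (n : ℝ) ≤ -δ + R n ω)
    (ha₀ : Tendsto (fun n => a n M₀ / (n : ℝ)) atTop (nhds 0))
    (h₂ : ∀ M ∈ N₂,
      TendstoInProbZero (fun n ω => (T n M ω - T n M₀ ω) / a n M₀) ∧
      1 < Filter.liminf (fun n => a n M / a n M₀) atTop)
    (hatM : ℕ → Ω → 𝓜)
    (hmax : ∀ n ω M, W n M ω ≤ W n (hatM n ω) ω) :
    Tendsto (fun n => (ℙ {ω | hatM n ω = M₀}).toReal) atTop (nhds 1) := by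
  classical
  -- Step 1: for each wrong model M, P(W n M₀ ≤ W n M) → 0
  have key : ∀ M : 𝓜, M ≠ M₀ →
      Tendsto (fun n => (ℙ {ω | W n M₀ ω ≤ W n M ω}).toReal) atTop (nhds 0) := by
    intro M hMne
    have hMmem : M ∈ N₁ ∪ N₂ := by rw [← hsplit]; exact hMne
    rcases hMmem with hM1 | hM2
    · -- underestimation case
      obtain ⟨δ, hδ, R, hR, hae⟩ := h₁ M hM1
      have hev : ∀ᶠ n in atTop,
          (ℙ {ω | W n M₀ ω ≤ W n M ω}).toReal ≤ (ℙ {ω | δ/4 < |R n ω|}).toReal := by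
        have h1 : ∀ᶠ n in atTop, a n M₀ / (n : ℝ) < δ/2 :=
          ha₀.eventually_lt_const (by linarith)
        filter_upwards [h1, eventually_ge_atTop 1] with n hn1 hn2
        refine ENNReal.toReal_mono (measure_ne_top _ _) ?_
        refine measure_mono_ae ?_
        filter_upwards [hae n] with ω hg hw
        have hnpos : (0:ℝ) < (n : ℝ) := by exact_mod_cast hn2
        have hw' : T n M₀ ω - a n M₀ ≤ T n M ω - a n M := by
          rw [← hW n M₀ ω, ← hW n M ω]; exact hw
        have h3 : -(a n M₀) ≤ T n M ω - T n M₀ ω := by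
          have := ha_pos n M; linarith
        have h4 : -(a n M₀) / (n : ℝ) ≤ (T n M ω - T n M₀ ω) / (n : ℝ) :=
          div_le_div_of_nonneg_right h3 hnpos.le |>.trans_eq rfl
        have h5 : -(a n M₀) / (n : ℝ) = -(a n M₀ / (n : ℝ)) := neg_div _ _
        have hRge : δ/2 ≤ R n ω := by
          have := h4.trans hg
          rw [h5] at this
          linarith
        have : δ/4 < R n ω := by linarith
        exact lt_of_lt_of_le this (le_abs_self _)
      refine tendsto_of_tendsto_of_tendsto_of_le_of_le' tendsto_const_nhds
        (hR (δ/4) (by linarith)) ?_ hev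
      exact Eventually.of_forall fun n => ENNReal.toReal_nonneg
    · -- overestimation case
      obtain ⟨hX, hL⟩ := h₂ M hM2
      set L := Filter.liminf (fun n => a n M / a n M₀) atTop with hLdef
      set t : ℝ := (1 + L) / 2 with htdef
      have h1t : 1 < t := by rw [htdef]; linarith
      have htL : t < L := by rw [htdef]; linarith
      have hbd : IsBoundedUnder (· ≥ ·) atTop (fun n => a n M / a n M₀) :=
        isBoundedUnder_of ⟨0, fun n => (div_pos (ha_pos n M) (ha_pos n M₀)).le⟩
      have hev' : ∀ᶠ n in atTop, t < a n M / a n M₀ :=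
        eventually_lt_of_lt_liminf htL hbd
      have hev : ∀ᶠ n in atTop,
          (ℙ {ω | W n M₀ ω ≤ W n M ω}).toReal ≤
            (ℙ {ω | (t-1)/2 < |(T n M ω - T n M₀ ω) / a n M₀|}).toReal := by
        filter_upwards [hev'] with n hn
        refine ENNReal.toReal_mono (measure_ne_top _ _) ?_
        refine measure_mono ?_
        intro ω hw
        simp only [Set.mem_setOf_eq] at hw ⊢
        have ha0 := ha_pos n M₀
        have hw' : T n M₀ ω - a n M₀ ≤ T n M ω - a n M := by
          rw [← hW n M₀ ω, ← hW n M ω]; exact hw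
        have h3 : a n M - a n M₀ ≤ T n M ω - T n M₀ ω := by linarith
        have h4 : (a n M - a n M₀) / a n M₀ ≤ (T n M ω - T n M₀ ω) / a n M₀ :=
          div_le_div_of_nonneg_right h3 ha0.le |>.trans_eq rfl
        have h6 : (a n M - a n M₀) / a n M₀ = a n M / a n M₀ - 1 := by
          field_simp
        have h7 : t - 1 ≤ (T n M ω - T n M₀ ω) / a n M₀ := by
          rw [h6] at h4; linarith
        have : (t-1)/2 < (T n M ω - T n M₀ ω) / a n M₀ := by linarith
        exact lt_of_lt_of_le this (le_abs_self _)
      refine tendsto_of_tendsto_of_tendsto_of_le_of_le' tendsto_const_nhds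
        (by simpa using hX ((t-1)/2) (by linarith)) ?_ hev
      exact Eventually.of_forall fun n => ENNReal.toReal_nonneg
  -- Step 2: P(hatM n ≠ M₀) → 0
  set S : Finset 𝓜 := Finset.univ.filter (fun M => M ≠ M₀) with hSdef
  have hsum : Tendsto (fun n => ∑ M ∈ S, (ℙ {ω | W n M₀ ω ≤ W n M ω}).toReal)
      atTop (nhds 0) := by
    have h := tendsto_finset_sum S
      (fun M hM => key M ((Finset.mem_filter.mp hM).2))
    simpa using h
  have hne0 : Tendsto (fun n => (ℙ {ω | hatM n ω ≠ M₀}).toReal) atTop (nhds 0) := by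
    refine tendsto_of_tendsto_of_tendsto_of_le_of_le tendsto_const_nhds hsum
      (fun n => ENNReal.toReal_nonneg) (fun n => ?_)
    have hsub : {ω | hatM n ω ≠ M₀} ⊆ ⋃ M ∈ S, {ω | W n M₀ ω ≤ W n M ω} := by
      intro ω hω
      exact Set.mem_biUnion (Finset.mem_filter.mpr ⟨Finset.mem_univ _, hω⟩)
        (hmax n ω M₀)
    calc (ℙ {ω | hatM n ω ≠ M₀}).toReal
        ≤ (ℙ (⋃ M ∈ S, {ω | W n M₀ ω ≤ W n M ω})).toReal :=
          ENNReal.toReal_mono (measure_ne_top _ _) (measure_mono hsub)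
      _ ≤ (∑ M ∈ S, ℙ {ω | W n M₀ ω ≤ W n M ω}).toReal := by
          refine ENNReal.toReal_mono ?_ (measure_biUnion_finset_le S _)
          exact ENNReal.sum_ne_top.mpr fun M _ => measure_ne_top _ _
      _ = ∑ M ∈ S, (ℙ {ω | W n M₀ ω ≤ W n M ω}).toReal :=
          ENNReal.toReal_sum fun M _ => measure_ne_top _ _
  -- Step 3: conclude
  have hlow : Tendsto (fun n => 1 - (ℙ {ω | hatM n ω ≠ M₀}).toReal) atTop (nhds 1) := by
    have h := (tendsto_const_nhds (x := (1:ℝ)) (f := atTop)).sub hne0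
    simpa using h
  refine tendsto_of_tendsto_of_tendsto_of_le_of_le hlow tendsto_const_nhds
    (fun n => ?_) (fun n => ?_)
  · -- 1 - P(≠) ≤ P(=)
    have huniv : {ω | hatM n ω = M₀} ∪ {ω | hatM n ω ≠ M₀} = Set.univ := by
      ext ω; simp [em]
    have hle : (1:ENNReal) ≤ ℙ {ω | hatM n ω = M₀} + ℙ {ω | hatM n ω ≠ M₀} := by
      calc (1:ENNReal) = ℙ (Set.univ : Set Ω) := measure_univ.symm
        _ = ℙ ({ω | hatM n ω = M₀} ∪ {ω | hatM n ω ≠ M₀}) := by rw [huniv]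
        _ ≤ ℙ {ω | hatM n ω = M₀} + ℙ {ω | hatM n ω ≠ M₀} := measure_union_le _ _
    have h2 := ENNReal.toReal_mono
      (ENNReal.add_ne_top.mpr ⟨measure_ne_top _ _, measure_ne_top _ _⟩) hle
    rw [ENNReal.toReal_add (measure_ne_top _ _) (measure_ne_top _ _),
      ENNReal.toReal_one] at h2
    linarith
  · -- P(=) ≤ 1
    have h1 : ℙ {ω | hatM n ω = M₀} ≤ 1 := prob_le_one
    have h2 := ENNReal.toReal_mono ENNReal.one_ne_top h1
    simpa using h2
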